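/- For positive integers a, b and k1, k2 ∈ N, the infimal sum of staircases satisfies S_{a,b,k1} ⊞ S_{a,b,k2} = S_{a,b,k1+k2}. -/

import Mathlib

open Pointwise

def Staircase (a b k : ℕ) : Set (ℕ × ℕ) := {p | p.1 / b + p.2 / a ≤ k - 1}

def boxSum (X Y : Set (ℕ × ℕ)) : Set (ℕ × ℕ) := (Xᶜ + Yᶜ)ᶜ

theorem staircase_boxSum (a b k₁ k₂ : ℕ) (ha : 0 < a) (hb : 0 < b)
    (hk₁ : 0 < k₁) (hk₂ : 0 < k₂) :
    boxSum (Staircase a b k₁) (Staircase a b k₂) = Staircase a b (k₁ + k₂) := by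
  have key : (Staircase a b k₁)ᶜ + (Staircase a b k₂)ᶜ = (Staircase a b (k₁ + k₂))ᶜ := by
    ext ⟨i, j⟩
    simp only [Set.mem_add, Set.mem_compl_iff, Staircase, Set.mem_setOf_eq, not_le,
      Prod.exists, Prod.mk_add_mk, Prod.mk.injEq]
    constructor
    · rintro ⟨i₁, j₁, h₁, i₂, j₂, h₂, hi, hj⟩
      subst hi hj
      have hdi : i₁ / b + i₂ / b ≤ (i₁ + i₂) / b := Nat.add_div_le_add_div i₁ i₂ b
      have hdj : j₁ / a + j₂ / a ≤ (j₁ + j₂) / a := Nat.add_div_le_add_div j₁ j₂ a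
      generalize i₁ / b = x₁ at *
      generalize i₂ / b = x₂ at *
      generalize j₁ / a = y₁ at *
      generalize j₂ / a = y₂ at *
      generalize (i₁ + i₂) / b = X at *
      generalize (j₁ + j₂) / a = Y at *
      omega
    · intro h
      obtain ⟨m, hmqi, hmk, hmor⟩ : ∃ m, m ≤ i / b ∧ m ≤ k₁ ∧ (m = i / b ∨ m = k₁) :=
        ⟨min (i / b) k₁, min_le_left _ _, min_le_right _ _, min_choice _ _⟩
      have hmb : m * b ≤ i := le_trans (Nat.mul_le_mul_right b hmqi) (Nat.div_mul_le_self i b)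
      have hna : (k₁ - m) * a ≤ j := by
        have hnqj : k₁ - m ≤ j / a := by
          generalize i / b = x at *
          generalize j / a = y at *
          omega
        exact le_trans (Nat.mul_le_mul_right a hnqj) (Nat.div_mul_le_self j a)
      refine ⟨m * b, (k₁ - m) * a, ?_, i - m * b, j - (k₁ - m) * a, ?_, by omega, by omega⟩
      · rw [Nat.mul_div_cancel m hb, Nat.mul_div_cancel (k₁ - m) ha]
        omega
      · have e1 : (i - m * b) / b = i / b - m := by
          rw [← Nat.sub_mul_div i b m]
          ring_nf
        have e2 : (j - (k₁ - m) * a) / a = j / a - (k₁ - m) := by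
          rw [← Nat.sub_mul_div j a (k₁ - m)]
          ring_nf
        rw [e1, e2]
        generalize i / b = x at *
        generalize j / a = y at *
        omega
  unfold boxSum
  rw [key, compl_compl]
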